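/- For r = 1: if n₀ > n₁ ≥ 0 are natural numbers and φ₀ is a real number with 2^{n₀} φ₀ ≡ π (mod 2π), then for all real φ: |sin(2^{n₁−1}(φ − φ₀))| ≥ (1/2^{n₀−n₁}) |cos(2^{n₀−1} φ)|. -/
import Mathlib


open Real

lemma abs_sin_nat_mul_le (x : ℝ) : ∀ n : ℕ, |Real.sin (n * x)| ≤ n * |Real.sin x| := by
  intro n
  induction n with
  | zero => simp
  | succ k ih =>
    have hx : ((k + 1 : ℕ) : ℝ) * x = (k : ℝ) * x + x := by push_cast; ring
    rw [hx, Real.sin_add]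
    calc |Real.sin ((k:ℝ)*x) * Real.cos x + Real.cos ((k:ℝ)*x) * Real.sin x|
        ≤ |Real.sin ((k:ℝ)*x) * Real.cos x| + |Real.cos ((k:ℝ)*x) * Real.sin x| := abs_add_le _ _
      _ ≤ |Real.sin ((k:ℝ)*x)| * 1 + 1 * |Real.sin x| := by
          rw [abs_mul, abs_mul]
          gcongr
          all_goals exact Real.abs_cos_le_one _
      _ ≤ (k : ℝ) * |Real.sin x| + 1 * |Real.sin x| := by
          rw [mul_one]; gcongr
      _ = ((k + 1 : ℕ) : ℝ) * |Real.sin x| := by push_cast; ring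

theorem trig_lower_bound_base_case (n₀ n₁ : ℕ) (h : n₁ < n₀) (φ₀ : ℝ)
    (hφ₀ : ∃ m : ℤ, (2 : ℝ) ^ n₀ * φ₀ = π + 2 * π * m) (φ : ℝ) :
    (1 / 2 ^ (n₀ - n₁)) * |Real.cos ((2 : ℝ) ^ ((n₀ : ℤ) - 1) * φ)| ≤
      |Real.sin ((2 : ℝ) ^ ((n₁ : ℤ) - 1) * (φ - φ₀))| := by
  obtain ⟨m, hm⟩ := hφ₀
  have h2 : (2:ℝ) ≠ 0 := two_ne_zero
  -- value of 2^(n₀-1) * φ₀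
  have hpow : (2:ℝ) ^ ((n₀ : ℤ) - 1) = (2:ℝ) ^ n₀ / 2 := by
    rw [zpow_sub₀ h2, zpow_natCast, zpow_one]
  have h1 : (2:ℝ) ^ ((n₀ : ℤ) - 1) * φ₀ = π/2 + (m:ℝ) * π := by
    rw [hpow]
    have : (2:ℝ)^n₀ / 2 * φ₀ = ((2:ℝ)^n₀ * φ₀) / 2 := by ring
    rw [this, hm]; ring
  set A := (2:ℝ) ^ ((n₀ : ℤ) - 1) * φ with hA
  -- |sin(2^(n₀-1)(φ-φ₀))| = |cos A|
  have hsplit : (2:ℝ) ^ ((n₀ : ℤ) - 1) * (φ - φ₀) = (A - π/2) - (m:ℝ) * π := by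
    rw [mul_sub, h1, hA]; ring
  have hsin0 : Real.sin ((m:ℝ) * π) = 0 := by
    simp [Real.sin_int_mul_pi m]
  have hcos1 : |Real.cos ((m:ℝ) * π)| = 1 := by
    have hsq := Real.sin_sq_add_cos_sq ((m:ℝ) * π)
    rw [hsin0] at hsq
    have h0 := abs_nonneg (Real.cos ((m:ℝ) * π))
    nlinarith [sq_abs (Real.cos ((m:ℝ) * π))]
  have hkey : |Real.sin ((2:ℝ) ^ ((n₀ : ℤ) - 1) * (φ - φ₀))| = |Real.cos A| := by
    have hv : Real.sin (A - π/2 - (m:ℝ)*π) = -(Real.cos A * Real.cos ((m:ℝ)*π)) := by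
      rw [Real.sin_sub, Real.sin_sub, Real.cos_sub, hsin0, Real.sin_pi_div_two,
        Real.cos_pi_div_two]
      ring
    rw [hsplit, hv, abs_neg, abs_mul, hcos1, mul_one]
  -- relate exponents
  have hfac : (2:ℝ) ^ ((n₀ : ℤ) - 1) * (φ - φ₀)
      = ((2 ^ (n₀ - n₁) : ℕ) : ℝ) * ((2:ℝ) ^ ((n₁ : ℤ) - 1) * (φ - φ₀)) := by
    have : ((2 ^ (n₀ - n₁) : ℕ) : ℝ) = (2:ℝ) ^ (((n₀ - n₁ : ℕ)) : ℤ) := by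
      push_cast; rw [zpow_natCast]
    rw [this, ← mul_assoc, ← zpow_add₀ h2]
    congr 2
    have : ((n₀ - n₁ : ℕ) : ℤ) = (n₀ : ℤ) - n₁ := by
      exact_mod_cast Int.ofNat_sub h.le
    rw [this]; ring
  have hineq := abs_sin_nat_mul_le ((2:ℝ) ^ ((n₁ : ℤ) - 1) * (φ - φ₀)) (2 ^ (n₀ - n₁))
  rw [← hfac, hkey] at hineq
  have hNpos : (0:ℝ) < 2 ^ (n₀ - n₁) := by positivity
  rw [one_div, inv_mul_le_iff₀ hNpos]
  calc |Real.cos A| ≤ ((2 ^ (n₀ - n₁) : ℕ) : ℝ) * |Real.sin ((2:ℝ) ^ ((n₁ : ℤ) - 1) * (φ - φ₀))| := hineq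
    _ = 2 ^ (n₀ - n₁) * |Real.sin ((2:ℝ) ^ ((n₁ : ℤ) - 1) * (φ - φ₀))| := by push_cast; ring
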